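/- If every space N_α (α ∈ A) is Hausdorff, then the quotient space N_upp is Hausdorff. -/
import Mathlib


open Topology Filter

/-- The identification relation on the disjoint union `Σ α, N α`:
`(α,p) ∼ (β,q)` iff (`α ≤ β` and `ψ_{αβ}(p) = q`) or (`β ≤ α` and `ψ_{βα}(q) = p`). -/
def simRel {A : Type*} [LinearOrder A] {N : A → Type*}
    (ψ : ∀ α β : A, α ≤ β → N α → N β) :
    (Σ α, N α) → (Σ α, N α) → Prop :=
  fun x y =>
    (∃ h : x.1 ≤ y.1, ψ x.1 y.1 h x.2 = y.2) ∨
    (∃ h : y.1 ≤ x.1, ψ y.1 x.1 h y.2 = x.2)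

/-- If every `N_α` is Hausdorff then the quotient `N_upp` is Hausdorff. -/
theorem quotient_t2Space
    {M : Type*} [TopologicalSpace M]
    {A : Type*} [LinearOrder A] [Nonempty A]
    {N : A → Type*} [∀ α, TopologicalSpace (N α)]
    (ι : ∀ α, M → N α) (hι : ∀ α, IsOpenEmbedding (ι α))
    (ψ : ∀ α β : A, α ≤ β → N α → N β)
    (hψ : ∀ (α β : A) (h : α ≤ β), IsOpenEmbedding (ψ α β h))
    (hψι : ∀ (α β : A) (h : α ≤ β), (ψ α β h) ∘ (ι α) = ι β)
    (hψid : ∀ (α : A) (h : α ≤ α), ψ α α h = id)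
    (hψcomp : ∀ (α β γ : A) (h₁ : α ≤ β) (h₂ : β ≤ γ),
      (ψ β γ h₂) ∘ (ψ α β h₁) = ψ α γ (h₁.trans h₂))
    (hT2 : ∀ α : A, T2Space (N α)) :
    T2Space (Quot (simRel ψ)) := by
  -- key characterization of the relation via a common upper bound
  have key : ∀ (α β γ : A) (h1 : α ≤ γ) (h2 : β ≤ γ) (p : N α) (q : N β),
      simRel ψ ⟨α, p⟩ ⟨β, q⟩ ↔ ψ α γ h1 p = ψ β γ h2 q := by
    intro α β γ h1 h2 p q
    constructor
    · rintro (⟨h, e⟩ | ⟨h, e⟩)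
      · have := congrFun (hψcomp α β γ h h2) p
        simp only [Function.comp_apply] at this
        rw [e] at this
        rw [← this]
      · have := congrFun (hψcomp β α γ h h1) q
        simp only [Function.comp_apply] at this
        rw [e] at this
        rw [← this]
    · intro e
      rcases le_total α β with h | h
      · left
        refine ⟨h, (hψ β γ h2).injective ?_⟩
        have := congrFun (hψcomp α β γ h h2) p
        simp only [Function.comp_apply] at this
        rw [this, e]
      · right
        refine ⟨h, (hψ α γ h1).injective ?_⟩
        have := congrFun (hψcomp β α γ h h1) q
        simp only [Function.comp_apply] at this
        rw [this, ← e]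
  have hrefl : ∀ x, simRel ψ x x := fun x => Or.inl ⟨le_refl _, by rw [hψid]; rfl⟩
  have heqv : Equivalence (simRel ψ) := by
    refine ⟨hrefl, ?_, ?_⟩
    · rintro ⟨α, p⟩ ⟨β, q⟩ (⟨h, e⟩ | ⟨h, e⟩)
      · exact Or.inr ⟨h, e⟩
      · exact Or.inl ⟨h, e⟩
    · rintro ⟨α, p⟩ ⟨β, q⟩ ⟨γ, r⟩ hxy hyz
      set δ := max α (max β γ) with hδ
      have hα : α ≤ δ := le_max_left _ _
      have hβ : β ≤ δ := le_trans (le_max_left _ _) (le_max_right _ _)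
      have hγ : γ ≤ δ := le_trans (le_max_right _ _) (le_max_right _ _)
      rw [key α β δ hα hβ] at hxy
      rw [key β γ δ hβ hγ] at hyz
      rw [key α γ δ hα hγ]
      rw [hxy, hyz]
  have quot_eq : ∀ x y, Quot.mk (simRel ψ) x = Quot.mk (simRel ψ) y ↔ simRel ψ x y :=
    fun x y => Quot.eq.trans (heqv.eqvGen_iff)
  -- Quot.mk is an open map
  have hopen : IsOpenMap (Quot.mk (simRel ψ)) := by
    intro U hU
    rw [isOpen_coinduced]
    have hsat : Quot.mk (simRel ψ) ⁻¹' (Quot.mk (simRel ψ) '' U) =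
        {y | ∃ x ∈ U, simRel ψ x y} := by
      ext y
      simp only [Set.mem_preimage, Set.mem_image, Set.mem_setOf_eq]
      constructor
      · rintro ⟨x, hx, hxy⟩
        exact ⟨x, hx, (quot_eq x y).1 hxy⟩
      · rintro ⟨x, hx, hxy⟩
        exact ⟨x, hx, (quot_eq x y).2 hxy⟩
    rw [hsat]
    rw [isOpen_sigma_iff]
    intro β
    have : Sigma.mk β ⁻¹' {y | ∃ x ∈ U, simRel ψ x y} =
        ⋃ α, ((⋃ h : α ≤ β, ψ α β h '' (Sigma.mk α ⁻¹' U)) ∪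
              (⋃ h : β ≤ α, ψ β α h ⁻¹' (Sigma.mk α ⁻¹' U))) := by
      ext q
      simp only [Set.mem_preimage, Set.mem_setOf_eq, Set.mem_iUnion, Set.mem_union,
        Set.mem_image]
      constructor
      · rintro ⟨⟨α, p⟩, hp, (⟨h, e⟩ | ⟨h, e⟩)⟩
        · exact ⟨α, Or.inl ⟨h, p, hp, e⟩⟩
        · exact ⟨α, Or.inr ⟨h, by rwa [e]⟩⟩
      · rintro ⟨α, (⟨h, p, hp, e⟩ | ⟨h, hq⟩)⟩
        · exact ⟨⟨α, p⟩, hp, Or.inl ⟨h, e⟩⟩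
        · exact ⟨⟨α, ψ β α h q⟩, hq, Or.inr ⟨h, rfl⟩⟩
    rw [this]
    refine isOpen_iUnion fun α => IsOpen.union ?_ ?_
    · exact isOpen_iUnion fun h => (hψ α β h).isOpenMap _
        (isOpen_sigma_iff.1 hU α)
    · exact isOpen_iUnion fun h => (hψ β α h).continuous.isOpen_preimage _
        (isOpen_sigma_iff.1 hU α)
  -- now T2
  constructor
  intro a b hab
  obtain ⟨⟨α, p⟩, rfl⟩ := Quot.exists_rep a
  obtain ⟨⟨β, q⟩, rfl⟩ := Quot.exists_rep b
  set γ := max α β with hγ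
  have hα : α ≤ γ := le_max_left _ _
  have hβ : β ≤ γ := le_max_right _ _
  set p' := ψ α γ hα p with hp'
  set q' := ψ β γ hβ q with hq'
  have hne : p' ≠ q' := by
    intro h
    exact hab ((quot_eq _ _).2 ((key α β γ hα hβ p q).2 h))
  haveI := hT2 γ
  obtain ⟨V, W, hV, hW, hpV, hqW, hVW⟩ := t2_separation hne
  refine ⟨Quot.mk _ '' (Sigma.mk γ '' V), Quot.mk _ '' (Sigma.mk γ '' W),
    hopen _ (IsOpenEmbedding.sigmaMk.isOpenMap _ hV),
    hopen _ (IsOpenEmbedding.sigmaMk.isOpenMap _ hW), ?_, ?_, ?_⟩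
  · exact ⟨⟨γ, p'⟩, ⟨p', hpV, rfl⟩, ((quot_eq _ _).2 (Or.inl ⟨hα, rfl⟩)).symm⟩
  · exact ⟨⟨γ, q'⟩, ⟨q', hqW, rfl⟩, ((quot_eq _ _).2 (Or.inl ⟨hβ, rfl⟩)).symm⟩
  · rw [Set.disjoint_left]
    rw [Set.image_image, Set.image_image]
    rintro z ⟨v, hv, rfl⟩ ⟨w, hw, hvw⟩
    have h1 : simRel ψ ⟨γ, w⟩ ⟨γ, v⟩ := (quot_eq _ _).1 hvw
    have h2 := (key γ γ γ le_rfl le_rfl w v).1 h1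
    rw [hψid] at h2
    simp only [id] at h2
    exact Set.disjoint_left.1 hVW hv (h2 ▸ hw)
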